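/- Let Γ be a group and 𝒳 a set of subgroups of Γ, closed as a subset of {0,1}^Γ with the product topology, such that every X ∈ 𝒳 is finite and the trivial subgroup is not in 𝒳. Then there exists a finite subset ℱ ⊆ 𝒳 such that for every X ∈ 𝒳 there is Y ∈ ℱ with Y ⊆ X. Moreover, if 𝒳 is invariant under conjugation then ℱ can be chosen invariant under conjugation. -/

import Mathlib

/-- If `𝒳` is a family of finite subgroups of `Γ`, closed in `{0,1}^Γ` and not
containing the trivial subgroup, then there is a finite subfamily `ℱ ⊆ 𝒳` such that
every member of `𝒳` contains some member of `ℱ`; moreover if `𝒳` is conjugation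
invariant then `ℱ` can be chosen conjugation invariant. -/
theorem stmt_18 {Γ : Type*} [Group Γ] (𝒳 : Set (Subgroup Γ))
    (hclosed : IsClosed {f : Γ → Bool | ∃ X ∈ 𝒳, ∀ g : Γ, f g = true ↔ g ∈ X})
    (hfin : ∀ X ∈ 𝒳, (X : Set Γ).Finite)
    (htriv : ⊥ ∉ 𝒳) :
    ∃ ℱ : Set (Subgroup Γ), ℱ ⊆ 𝒳 ∧ ℱ.Finite ∧
      (∀ X ∈ 𝒳, ∃ Y ∈ ℱ, Y ≤ X) ∧
      ((∀ X ∈ 𝒳, ∀ g : Γ, Subgroup.map (MulAut.conj g).toMonoidHom X ∈ 𝒳) →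
        ∀ Y ∈ ℱ, ∀ g : Γ, Subgroup.map (MulAut.conj g).toMonoidHom Y ∈ ℱ) := by
  classical
  set K := {f : Γ → Bool | ∃ X ∈ 𝒳, ∀ g : Γ, f g = true ↔ g ∈ X} with hK
  -- indicator function
  set χ : Subgroup Γ → (Γ → Bool) := fun X g => decide (g ∈ X) with hχ
  have hχmem : ∀ X ∈ 𝒳, χ X ∈ K := by
    intro X hX
    exact ⟨X, hX, fun g => by simp [hχ]⟩
  -- minimal elements
  set ℱ : Set (Subgroup Γ) := {Y ∈ 𝒳 | ∀ Z ∈ 𝒳, Z ≤ Y → Z = Y} with hℱ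
  -- every X ∈ 𝒳 contains a minimal element
  have hmin : ∀ X ∈ 𝒳, ∃ Y ∈ ℱ, Y ≤ X := by
    intro X hX
    have hfinS : {Y : Subgroup Γ | Y ∈ 𝒳 ∧ Y ≤ X}.Finite := by
      have h1 : {t : Set Γ | t ⊆ (X : Set Γ)}.Finite := (hfin X hX).finite_subsets
      have h2 : {Y : Subgroup Γ | Y ∈ 𝒳 ∧ Y ≤ X} ⊆
          (fun Y : Subgroup Γ => (Y : Set Γ)) ⁻¹' {t : Set Γ | t ⊆ (X : Set Γ)} := by
        intro Y hY; exact hY.2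
      exact (h1.preimage (SetLike.coe_injective.injOn)).subset h2
    obtain ⟨Y, hY, hYmin'⟩ := Set.Finite.exists_minimalFor id _ hfinS ⟨X, hX, le_refl X⟩
    have hYmin : ∀ Z ∈ {Y : Subgroup Γ | Y ∈ 𝒳 ∧ Y ≤ X}, Z ≤ Y → Y = Z :=
      fun Z hZ h => le_antisymm (hYmin' hZ h) h
    refine ⟨Y, ⟨hY.1, ?_⟩, hY.2⟩
    intro Z hZ hZY
    exact (hYmin Z ⟨hZ, le_trans hZY hY.2⟩ hZY).symm
  refine ⟨ℱ, fun Y hY => hY.1, ?_, hmin, ?_⟩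
  · -- finiteness via compactness
    have hKcompact : IsCompact K := hclosed.isCompact
    -- open cover indexed by ℱ
    have hcover : K ⊆ ⋃ Y : ℱ, {f : Γ → Bool | ∀ a ∈ ((Y : Subgroup Γ) : Set Γ), f a = true} := by
      rintro f ⟨X, hX, hfX⟩
      obtain ⟨Y, hYℱ, hYX⟩ := hmin X hX
      refine Set.mem_iUnion.2 ⟨⟨Y, hYℱ⟩, fun a ha => (hfX a).2 (hYX ha)⟩
    have hopen : ∀ Y : ℱ, IsOpen {f : Γ → Bool | ∀ a ∈ (((Y : Subgroup Γ)) : Set Γ), f a = true} := by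
      rintro ⟨Y, hY⟩
      have : {f : Γ → Bool | ∀ a ∈ (Y : Set Γ), f a = true}
          = ⋂ a ∈ (Y : Set Γ), {f : Γ → Bool | f a = true} := by
        ext f; simp
      rw [this]
      refine (hfin Y hY.1).isOpen_biInter fun a _ => ?_
      have : {f : Γ → Bool | f a = true} = (fun f : Γ → Bool => f a) ⁻¹' {true} := by
        ext f; simp
      rw [this]
      exact (isOpen_discrete {true}).preimage (continuous_apply a)
    obtain ⟨t, ht⟩ := hKcompact.elim_finite_subcover _ hopen hcover
    have : ℱ ⊆ (fun Y : ℱ => (Y : Subgroup Γ)) '' (t : Set ℱ) := by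
      intro Y hY
      have := ht (hχmem Y hY.1)
      obtain ⟨Z, hZt, hZY⟩ := Set.mem_iUnion₂.1 this
      have hle : (Z : Subgroup Γ) ≤ Y := by
        intro a ha
        have := hZY a ha
        simpa [hχ] using this
      have := hY.2 Z Z.2.1 hle
      exact ⟨Z, hZt, this⟩
    exact (t.finite_toSet.image _).subset this
  · -- conjugation invariance
    intro hconj Y hY g
    have key : ∀ (h : Γ) (Z : Subgroup Γ),
        Subgroup.map (MulAut.conj h⁻¹).toMonoidHom (Subgroup.map (MulAut.conj h).toMonoidHom Z) = Z := by
      intro h Z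
      rw [Subgroup.map_map]
      ext x
      simp [Subgroup.mem_map, mul_assoc]
    refine ⟨hconj Y hY.1 g, ?_⟩
    intro Z hZ hle
    have hle' : Subgroup.map (MulAut.conj g⁻¹).toMonoidHom Z ≤ Y := by
      have := Subgroup.map_mono (f := (MulAut.conj g⁻¹).toMonoidHom) hle
      rwa [key g Y] at this
    have := hY.2 _ (hconj Z hZ g⁻¹) hle'
    have h2 : Subgroup.map (MulAut.conj g).toMonoidHom
        (Subgroup.map (MulAut.conj g⁻¹).toMonoidHom Z) = Z := by
      have := key g⁻¹ Z; rw [inv_inv] at this; exact this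
    rw [← h2, this]
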